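/- Let S be an integrally closed domain of mixed characteristic p > 0 containing an element π with π^p = p, and suppose the Frobenius endomorphism on S/pS is surjective. Then the Frobenius induces a ring isomorphism S/πS ≅ S/pS, i.e. for x ∈ S, x^p ∈ pS if and only if x ∈ πS. -/
import Mathlib


/-- Let `S` be an integrally closed domain of mixed characteristic `p > 0` containing an
element `π` with `π^p = p`, and suppose the Frobenius endomorphism on `S/pS` is
surjective.  Then Frobenius induces a ring isomorphism `S/πS ≅ S/pS`; in particular, for
`x ∈ S`, `x^p ∈ pS` if and only if `x ∈ πS`. -/
theorem frobenius_iso_mod_pi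
    (p : ℕ) (hp : p.Prime)
    (S : Type) [CommRing S] [IsDomain S] [IsIntegrallyClosed S]
    (hp0 : (p : S) ≠ 0) (hpu : ¬ IsUnit (p : S))
    (π : S) (hπ : π ^ p = (p : S))
    (hfrob : ∀ x : S, ∃ y : S, y ^ p - x ∈ Ideal.span {(p : S)}) :
    (∃ φ : (S ⧸ Ideal.span {π}) ≃+* (S ⧸ Ideal.span {(p : S)}),
      ∀ x : S, φ (Ideal.Quotient.mk _ x) = Ideal.Quotient.mk _ (x ^ p)) ∧
    ∀ x : S, x ^ p ∈ Ideal.span {(p : S)} ↔ x ∈ Ideal.span {π} := by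
  haveI : Fact p.Prime := ⟨hp⟩
  have hπ0 : π ≠ 0 := by
    intro h
    apply hp0
    rw [← hπ, h, zero_pow hp.pos.ne']
  -- key: if x^p ∈ (p) then x ∈ (π)
  have key : ∀ x : S, x ^ p ∈ Ideal.span {(p : S)} → x ∈ Ideal.span {π} := by
    intro x hx
    rw [Ideal.mem_span_singleton] at hx ⊢
    obtain ⟨θ, hθ⟩ := hx
    set K := FractionRing S
    have hinj : Function.Injective (algebraMap S K) := IsFractionRing.injective S K
    have hπK : algebraMap S K π ≠ 0 := fun h => hπ0 (hinj (by rw [h, map_zero]))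
    set α : K := algebraMap S K x / algebraMap S K π with hα
    have hαp : α ^ p = algebraMap S K θ := by
      rw [hα, div_pow, div_eq_iff (pow_ne_zero _ hπK), ← map_pow, ← map_pow, ← map_mul,
        hθ, ← hπ, mul_comm]
    have hint : IsIntegral S α := by
      refine ⟨Polynomial.X ^ p - Polynomial.C θ,
        Polynomial.monic_X_pow_sub_C θ hp.ne_zero, ?_⟩
      simp [hαp]
    obtain ⟨y, hy⟩ := IsIntegrallyClosed.isIntegral_iff.mp hint
    refine ⟨y, hinj ?_⟩
    rw [map_mul, hy, hα, mul_div_cancel₀ _ hπK]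
  -- characteristic of S/pS
  haveI : CharP (S ⧸ Ideal.span {(p : S)}) p := CharP.quotient S p hpu
  -- the Frobenius ring hom S → S/pS
  set g : S →+* S ⧸ Ideal.span {(p : S)} :=
    (frobenius (S ⧸ Ideal.span {(p : S)}) p).comp (Ideal.Quotient.mk _) with hg
  have hgx : ∀ x : S, g x = Ideal.Quotient.mk _ (x ^ p) := by
    intro x
    simp [hg, frobenius_def]
  have hker : ∀ a ∈ Ideal.span {π}, g a = 0 := by
    intro a ha
    rw [Ideal.mem_span_singleton] at ha
    obtain ⟨t, ht⟩ := ha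
    rw [hgx, ht, mul_pow, hπ, Ideal.Quotient.eq_zero_iff_mem]
    exact Ideal.mem_span_singleton.mpr ⟨t ^ p, rfl⟩
  set φ0 : (S ⧸ Ideal.span {π}) →+* (S ⧸ Ideal.span {(p : S)}) :=
    Ideal.Quotient.lift _ g hker with hφ0
  have hφ0x : ∀ x : S, φ0 (Ideal.Quotient.mk _ x) = Ideal.Quotient.mk _ (x ^ p) := by
    intro x
    rw [hφ0, Ideal.Quotient.lift_mk, hgx]
  have hsurj : Function.Surjective φ0 := by
    intro z
    obtain ⟨x, rfl⟩ := Ideal.Quotient.mk_surjective z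
    obtain ⟨y, hy⟩ := hfrob x
    refine ⟨Ideal.Quotient.mk _ y, ?_⟩
    rw [hφ0x]
    exact Ideal.Quotient.eq.mpr hy
  have hinj : Function.Injective φ0 := by
    rw [injective_iff_map_eq_zero]
    intro a ha
    obtain ⟨x, rfl⟩ := Ideal.Quotient.mk_surjective a
    rw [hφ0x, Ideal.Quotient.eq_zero_iff_mem] at ha
    rw [Ideal.Quotient.eq_zero_iff_mem]
    exact key x ha
  refine ⟨⟨RingEquiv.ofBijective φ0 ⟨hinj, hsurj⟩, hφ0x⟩, fun x => ⟨key x, ?_⟩⟩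
  intro hx
  rw [Ideal.mem_span_singleton] at hx
  obtain ⟨t, ht⟩ := hx
  rw [ht, mul_pow, hπ]
  exact Ideal.mem_span_singleton.mpr ⟨t ^ p, rfl⟩
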